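/- For any two elements x, y of an abelian group G, the reflection space generated by {x, y} equals ⟨y - x⟩ + x, the coset of the cyclic subgroup generated by y - x shifted by x. -/

import Mathlib

/-- The reflection space generated by a subset `A`: the smallest subset of `G`
containing `A` closed under `(a, b) ↦ 2a - b`. -/
def reflGen {G : Type*} [AddCommGroup G] (A : Set G) : Set G :=
  ⋂₀ {B : Set G | A ⊆ B ∧ ∀ a ∈ B, ∀ b ∈ B, 2 • a - b ∈ B}

theorem reflGen_pair {G : Type*} [AddCommGroup G] (x y : G) :
    reflGen {x, y} = {g : G | ∃ m : ℤ, g = m • (y - x) + x} := by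
  apply Set.Subset.antisymm
  · apply Set.sInter_subset_of_mem
    constructor
    · intro g hg
      simp only [Set.mem_insert_iff, Set.mem_singleton_iff] at hg
      rcases hg with rfl | rfl
      · exact ⟨0, by simp⟩
      · exact ⟨1, by simp⟩
    · rintro a ⟨m, rfl⟩ b ⟨n, rfl⟩
      refine ⟨2 * m - n, ?_⟩
      simp only [two_nsmul, sub_zsmul, mul_zsmul, two_zsmul]
      abel
  · rintro g ⟨m, rfl⟩
    intro B hB
    rcases hB with ⟨hA, hcl⟩
    have hx : x ∈ B := hA (Or.inl rfl)
    have hy : y ∈ B := hA (Or.inr rfl)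
    have key : ∀ m : ℤ, m • (y - x) + x ∈ B ∧ (m + 1) • (y - x) + x ∈ B := by
      intro m
      induction m using Int.induction_on with
      | zero =>
        constructor
        · simpa using hx
        · simpa using hy
      | succ k ih =>
        refine ⟨ih.2, ?_⟩
        have := hcl _ ih.2 _ ih.1
        have h2 : 2 • (((k:ℤ) + 1) • (y - x) + x) - ((k:ℤ) • (y - x) + x)
            = ((k:ℤ) + 1 + 1) • (y - x) + x := by
          simp only [two_nsmul, add_zsmul, one_zsmul]
          abel
        rw [h2] at this
        convert this using 2
      | pred k ih =>
        have mem : ((-k : ℤ) - 1) • (y - x) + x ∈ B := by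
          have := hcl _ ih.1 _ ih.2
          have h2 : 2 • ((-k : ℤ) • (y - x) + x) - (((-k : ℤ) + 1) • (y - x) + x)
              = ((-k : ℤ) - 1) • (y - x) + x := by
            simp only [two_nsmul, add_zsmul, sub_zsmul, one_zsmul]
            abel
          rw [h2] at this
          exact this
        refine ⟨?_, ?_⟩
        · convert mem using 2
        · convert ih.1 using 2
          norm_num
    exact (key m).1
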